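/- Let τ_M > 0, τ_T > 0, a_M, a_T ∈ ℝ, t₀ ≤ t_f, and let u_T : ℝ → ℝ be continuous with u_T(s) ≥ −a_T for all s ∈ [t₀, t_f]. If Z : ℝ → ℝ satisfies Z′(s) = −τ_M·Ψ((t_f−s)/τ_M)·(−a_M) + τ_T·Ψ((t_f−s)/τ_T)·u_T(s) on [t₀, t_f] (the pursuer applies the constant command u_M = −a_M), then the terminal ZEM satisfies Z(t_f) ≥ Z(t₀) + ∂Z*(t_f − t₀). -/

import Mathlib

/-- Ψ(θ) = exp(−θ) + θ − 1 -/
noncomputable def Psi (θ : ℝ) : ℝ := Real.exp (-θ) + θ - 1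

/-- Υ(θ) = θ²/2 − exp(−θ) − θ + 1 -/
noncomputable def Upsilon (θ : ℝ) : ℝ := θ ^ 2 / 2 - Real.exp (-θ) - θ + 1

/-- The singular-region boundary ∂Z*(s) = a_M·τ_M²·Υ(s/τ_M) − a_T·τ_T²·Υ(s/τ_T). -/
noncomputable def singBdry (aM aT τM τT s : ℝ) : ℝ :=
  aM * τM ^ 2 * Upsilon (s / τM) - aT * τT ^ 2 * Upsilon (s / τT)

lemma psi_nonneg (θ : ℝ) : 0 ≤ Psi θ := by
  have := Real.add_one_le_exp (-θ)
  unfold Psi; linarith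

lemma upsilon_zero : Upsilon 0 = 0 := by simp [Upsilon]

lemma hasDerivAt_ups (τ tf : ℝ) (hτ : τ ≠ 0) (s : ℝ) :
    HasDerivAt (fun s => Upsilon ((tf - s) / τ)) (-(Psi ((tf - s) / τ) / τ)) s := by
  have hinner : HasDerivAt (fun s : ℝ => (tf - s) / τ) (-1 / τ) s := by
    have := ((hasDerivAt_const s tf).sub (hasDerivAt_id s)).div_const τ
    simpa using this
  set θ := (tf - s) / τ with hθ
  have hU : HasDerivAt Upsilon (Psi θ) θ := by
    have h1 : HasDerivAt (fun x : ℝ => x ^ 2 / 2) θ θ := by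
      simpa using (hasDerivAt_pow 2 θ).div_const 2
    have h2 : HasDerivAt (fun x : ℝ => Real.exp (-x)) (-Real.exp (-θ)) θ := by
      simpa [Function.comp_def] using (Real.hasDerivAt_exp (-θ)).comp θ (hasDerivAt_neg θ)
    have h3 := ((h1.sub h2).sub (hasDerivAt_id θ)).add_const 1
    have : HasDerivAt Upsilon (θ - -Real.exp (-θ) - 1) θ := by
      unfold Upsilon; exact h3
    convert this using 1
    unfold Psi; ring
  have := hU.comp s hinner
  convert this using 1
  case e'_9 => field_simp
  all_goals rfl

/-- If the pursuer applies the constant command u_M = −a_M while the target applies any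
continuous command u_T with u_T(s) ≥ −a_T, then the terminal ZEM satisfies
Z(t_f) ≥ Z(t₀) + ∂Z*(t_f − t₀). -/
theorem terminal_zem_lower_bound_min_pursuer
    (τM τT aM aT tf t₀ : ℝ) (hτM : 0 < τM) (hτT : 0 < τT) (ht : t₀ ≤ tf)
    (uT : ℝ → ℝ) (huTc : ContinuousOn uT (Set.Icc t₀ tf))
    (huT : ∀ s ∈ Set.Icc t₀ tf, -aT ≤ uT s)
    (Z : ℝ → ℝ)
    (hZ : ∀ s ∈ Set.Icc t₀ tf,
      HasDerivAt Z (-τM * Psi ((tf - s) / τM) * (-aM) + τT * Psi ((tf - s) / τT) * uT s) s) :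
    Z t₀ + singBdry aM aT τM τT (tf - t₀) ≤ Z tf := by
  set F : ℝ → ℝ := fun s =>
    Z s + aM * τM ^ 2 * Upsilon ((tf - s) / τM) - aT * τT ^ 2 * Upsilon ((tf - s) / τT) with hF
  have hF' : ∀ s ∈ Set.Icc t₀ tf,
      HasDerivAt F (τT * Psi ((tf - s) / τT) * (uT s + aT)) s := by
    intro s hs
    have h1 := (hZ s hs).add
      ((hasDerivAt_ups τM tf hτM.ne' s).const_mul (aM * τM ^ 2))
    have h2 := h1.sub ((hasDerivAt_ups τT tf hτT.ne' s).const_mul (aT * τT ^ 2))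
    convert h2 using 1
    have : τM ≠ 0 := hτM.ne'
    have : τT ≠ 0 := hτT.ne'
    case e'_9 =>
      field_simp
      ring
    all_goals rfl
  have hmono : MonotoneOn F (Set.Icc t₀ tf) := by
    apply monotoneOn_of_deriv_nonneg (convex_Icc t₀ tf)
    · exact fun x hx => (hF' x hx).continuousAt.continuousWithinAt
    · intro x hx
      rw [interior_Icc] at hx
      exact (hF' x (Set.mem_Icc_of_Ioo hx)).differentiableAt.differentiableWithinAt
    · intro x hx
      rw [interior_Icc] at hx
      have hx' := Set.mem_Icc_of_Ioo hx
      rw [(hF' x hx').deriv]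
      have h1 := psi_nonneg ((tf - x) / τT)
      have h2 := huT x hx'
      have : 0 ≤ uT x + aT := by linarith
      positivity
  have key := hmono (Set.left_mem_Icc.mpr ht) (Set.right_mem_Icc.mpr ht) ht
  simp only [hF, sub_self, zero_div, upsilon_zero, mul_zero, add_zero, sub_zero] at key
  unfold singBdry
  linarith
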